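/- 4 · ∫₀¹ log(1/u) · (1 − u²)/(1 + u²)² du = π. -/

import Mathlib

open Real MeasureTheory Set

private noncomputable def F10 (u : ℝ) : ℝ := Real.arctan u - u * Real.log u / (1 + u ^ 2)

private lemma F10_cont : Continuous F10 := by
  apply (Real.continuous_arctan).sub
  exact (Real.continuous_mul_log).div (by continuity) (fun x => by positivity)

private lemma F10_deriv {x : ℝ} (hx : 0 < x) :
    HasDerivAt F10 (Real.log (1 / x) * (1 - x ^ 2) / (1 + x ^ 2) ^ 2) x := by
  have h1 : (1 : ℝ) + x ^ 2 ≠ 0 := by positivity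
  have hd : HasDerivAt (fun u : ℝ => u * Real.log u / (1 + u ^ 2))
      (((Real.log x + 1) * (1 + x ^ 2) - x * Real.log x * (2 * x)) / (1 + x ^ 2) ^ 2) x := by
    apply HasDerivAt.div (Real.hasDerivAt_mul_log hx.ne')
    · simpa using ((hasDerivAt_pow 2 x).const_add 1)
    · exact h1
  have := (Real.hasDerivAt_arctan x).sub hd
  refine (this : HasDerivAt F10 _ x).congr_deriv ?_
  rw [Real.log_div one_ne_zero hx.ne', Real.log_one]
  field_simp
  ring

theorem stmt10 :
    4 * ∫ u in (0:ℝ)..1, Real.log (1 / u) * (1 - u ^ 2) / (1 + u ^ 2) ^ 2 = π := by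
  have hnonneg : ∀ x ∈ Ioo (0:ℝ) 1, 0 ≤ Real.log (1 / x) * (1 - x ^ 2) / (1 + x ^ 2) ^ 2 := by
    intro x hx
    have h1 : 0 ≤ Real.log (1 / x) := by
      apply Real.log_nonneg
      rw [le_div_iff₀ hx.1, one_mul]
      exact hx.2.le
    have h2 : 0 ≤ 1 - x ^ 2 := by nlinarith [hx.1, hx.2]
    positivity
  have hderiv : ∀ x ∈ Ioo (0:ℝ) 1,
      HasDerivAt F10 (Real.log (1 / x) * (1 - x ^ 2) / (1 + x ^ 2) ^ 2) x :=
    fun x hx => F10_deriv hx.1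
  have hint : IntervalIntegrable
      (fun u => Real.log (1 / u) * (1 - u ^ 2) / (1 + u ^ 2) ^ 2) volume 0 1 :=
    intervalIntegral.intervalIntegrable_deriv_of_nonneg
      (F10_cont.continuousOn)
      (by simpa using hderiv) (by simpa using hnonneg)
  have key : ∫ u in (0:ℝ)..1, Real.log (1 / u) * (1 - u ^ 2) / (1 + u ^ 2) ^ 2
      = F10 1 - F10 0 := by
    apply intervalIntegral.integral_eq_sub_of_hasDeriv_right_of_le zero_le_one
      (F10_cont.continuousOn)
      (fun x hx => (hderiv x hx).hasDerivWithinAt) hint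
  rw [key]
  simp [F10, Real.arctan_one]
  ring
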